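/- If a is a regular scale factor with cosmological event horizon (∫_{t₀}^∞ dt/a(t) < ∞), then a experiences inflationary periods at arbitrarily large times: for any N > 0 there is a nonempty open interval (c,d) with c > N on which a''(t) > 0. -/

import Mathlib

open Set MeasureTheory

/-- If a regular scale factor has a cosmological event horizon, then there are
inflationary periods at arbitrarily large times. -/
theorem cosmological_horizon_inflation (a : ℝ → ℝ)
    (ha0 : a 0 = 0)
    (hmono : StrictMonoOn a (Set.Ici 0))
    (hcont : ContinuousOn a (Set.Ici 0))
    (hsmooth : ContDiffOn ℝ 2 a (Set.Ioi 0))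
    (hreg : ∀ t > (0:ℝ), a t * deriv (deriv a) t / (deriv a t) ^ 2 ≤ 1)
    (t₀ : ℝ) (ht₀ : 0 < t₀)
    (hhoriz : MeasureTheory.IntegrableOn (fun t => 1 / a t) (Set.Ioi t₀)) :
    ∀ N > (0:ℝ), ∃ c d : ℝ, N < c ∧ c < d ∧
      ∀ t ∈ Set.Ioo c d, 0 < deriv (deriv a) t := by
  by_contra hcon
  push_neg at hcon
  obtain ⟨N, hN, h⟩ := hcon
  -- positivity of a on (0,∞)
  have hpos : ∀ t > (0:ℝ), 0 < a t := by
    intro t ht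
    have := hmono (show (0:ℝ) ∈ Set.Ici 0 from le_refl (0:ℝ)) ht.le ht
    rwa [ha0] at this
  -- regularity of derivatives
  have h1 : ContDiffOn ℝ 1 (deriv a) (Set.Ioi 0) :=
    hsmooth.deriv_of_isOpen isOpen_Ioi (by norm_num)
  have hfc : ContinuousOn (deriv (deriv a)) (Set.Ioi 0) :=
    h1.continuousOn_deriv_of_isOpen isOpen_Ioi le_rfl
  -- a'' ≤ 0 on (N, ∞)
  have hf_nonpos : ∀ t ∈ Set.Ioi N, deriv (deriv a) t ≤ 0 := by
    intro t ht
    by_contra hpos'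
    push_neg at hpos'
    have htpos : 0 < t := hN.trans ht
    have hca : ContinuousAt (deriv (deriv a)) t :=
      hfc.continuousAt (isOpen_Ioi.mem_nhds htpos)
    have hnh : (deriv (deriv a)) ⁻¹' Set.Ioi 0 ∈ nhds t :=
      hca.preimage_mem_nhds (Ioi_mem_nhds hpos')
    obtain ⟨c, d, ⟨hc, hd⟩, hsub⟩ := mem_nhds_iff_exists_Ioo_subset.mp hnh
    set c₁ := max c ((N + t) / 2) with hc₁def
    have hNc₁ : N < c₁ := by
      have : N < (N + t) / 2 := by simp only [Set.mem_Ioi] at ht; linarith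
      exact lt_of_lt_of_le this (le_max_right _ _)
    have hc₁t : c₁ < t := by
      have : (N + t) / 2 < t := by simp only [Set.mem_Ioi] at ht; linarith
      exact max_lt hc this
    obtain ⟨u, hu, hu0⟩ := h c₁ d hNc₁ (hc₁t.trans hd)
    have huIoo : u ∈ Set.Ioo c d :=
      ⟨lt_of_le_of_lt (le_max_left c _) hu.1, hu.2⟩
    have := hsub huIoo
    simp only [Set.mem_preimage, Set.mem_Ioi] at this
    linarith
  -- choose a base point s beyond N and t₀
  set s : ℝ := max (N + 1) (t₀ + 1) with hsdef
  have hsN : N < s := lt_of_lt_of_le (lt_add_one N) (le_max_left _ _)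
  have hst₀ : t₀ < s := lt_of_lt_of_le (lt_add_one t₀) (le_max_right _ _)
  have hs0 : 0 < s := ht₀.trans hst₀
  -- a' is antitone on [s, ∞)
  have hIciN : Set.Ici s ⊆ Set.Ioi 0 := fun x hx => lt_of_lt_of_le hs0 hx
  have hant : AntitoneOn (deriv a) (Set.Ici s) := by
    apply antitoneOn_of_deriv_nonpos (convex_Ici s)
      (h1.continuousOn.mono hIciN)
    · rw [interior_Ici]
      exact (h1.differentiableOn one_ne_zero).mono fun x hx => hs0.trans hx
    · intro x hx
      rw [interior_Ici] at hx
      exact hf_nonpos x (hsN.trans hx)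
  set M : ℝ := deriv a s with hMdef
  -- linear growth bound
  have hlin : ∀ t, s ≤ t → a t - a s ≤ M * (t - s) := by
    intro t ht
    apply (convex_Ici s).image_sub_le_mul_sub_of_deriv_le
      (hcont.mono fun x hx => le_trans hs0.le hx)
      ?_ ?_ s (show s ∈ Set.Ici s from le_refl s) t ht ht
    · rw [interior_Ici]
      exact (hsmooth.differentiableOn (by norm_num)).mono fun x hx => hs0.trans hx
    · intro x hx
      rw [interior_Ici] at hx
      exact hant (show s ∈ Set.Ici s from le_refl s) (show x ∈ Set.Ici s from (Set.mem_Ioi.mp hx).le) (Set.mem_Ioi.mp hx).le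
  set M' : ℝ := max M 0 with hM'def
  set K : ℝ := a s / s + M' with hKdef
  have haspos : 0 < a s := hpos s hs0
  have hK : 0 < K :=
    add_pos_of_pos_of_nonneg (div_pos haspos hs0) (le_max_right _ _)
  have hbound : ∀ t ∈ Set.Ioi s, a t ≤ K * t := by
    intro t ht
    simp only [Set.mem_Ioi] at ht
    have h1' := hlin t ht.le
    have h2 : a s / s * s = a s := div_mul_cancel₀ _ (ne_of_gt hs0)
    have h3 : a s / s * s ≤ a s / s * t :=
      mul_le_mul_of_nonneg_left ht.le (le_of_lt (div_pos haspos hs0))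
    have h4 : M * (t - s) ≤ M' * (t - s) :=
      mul_le_mul_of_nonneg_right (le_max_left M 0) (by linarith)
    have h5 : M' * (t - s) ≤ M' * t := by
      have : (0:ℝ) ≤ M' := le_max_right M 0
      nlinarith
    have : a t ≤ a s / s * t + M' * t := by linarith
    calc a t ≤ a s / s * t + M' * t := this
      _ = K * t := by rw [hKdef]; ring
  -- derive the contradiction with integrability
  have hI : IntegrableOn (fun t => 1 / a t) (Set.Ioi s) :=
    hhoriz.mono_set (Set.Ioi_subset_Ioi hst₀.le)
  have hg : IntegrableOn (fun t => K⁻¹ * t⁻¹) (Set.Ioi s) := by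
    apply MeasureTheory.Integrable.mono' hI
    · apply ContinuousOn.aestronglyMeasurable _ measurableSet_Ioi
      exact continuousOn_const.mul
        (continuousOn_inv₀.mono fun x hx => ne_of_gt (hs0.trans hx))
    · filter_upwards [MeasureTheory.ae_restrict_mem measurableSet_Ioi] with t ht
      have htpos : 0 < t := hs0.trans ht
      have hat : 0 < a t := hpos t htpos
      have hKt : 0 < K * t := mul_pos hK htpos
      rw [Real.norm_eq_abs, abs_of_nonneg (by positivity)]
      have : 1 / (K * t) ≤ 1 / a t := one_div_le_one_div_of_le hat (hbound t ht)
      calc K⁻¹ * t⁻¹ = 1 / (K * t) := by rw [one_div, mul_inv]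
        _ ≤ 1 / a t := this
  have hg2 : IntegrableOn (fun t : ℝ => t⁻¹) (Set.Ioi s) := by
    apply MeasureTheory.IntegrableOn.congr_fun (hg.const_mul K) ?_ measurableSet_Ioi
    intro x _
    show K * (K⁻¹ * x⁻¹) = x⁻¹
    rw [← mul_assoc, mul_inv_cancel₀ hK.ne', one_mul]
  have hg3 : IntegrableOn (fun t : ℝ => t ^ (-1 : ℝ)) (Set.Ioi s) := by
    apply hg2.congr_fun ?_ measurableSet_Ioi
    intro x hx
    show x⁻¹ = x ^ (-1 : ℝ)
    rw [Real.rpow_neg_one]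
  have := (integrableOn_Ioi_rpow_iff hs0).mp hg3
  linarith
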